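/- arXiv:2509.20526 — 7 statements merged into one kernel-verified Lean document; each statement's English description precedes it below -/
import Mathlib

section
/- Let q = ⌊n/A⌋ and r = n mod A. For every family x of n strings of length L over an alphabet of size A, the total pairwise overlap satisfies 2·∑_{i<j} O(i,j) ≥ L·((A − r)·q² + r·(q+1)² − n); equivalently, the average pairwise overlap n̄_w = (∑_{i<j} O(i,j))/C(n,2) satisfies n̄_w ≥ (L/(n(n−1)))·((A − r)·q² + r·(q+1)² − n). -/
open Finset

-- convexity key: sum of squares with given sum is minimized at balanced
lemma key_int (A q r : ℕ) (f : Fin A → ℕ) (hs : ∑ a, f a = A * q + r) :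
    (A * q ^ 2 + 2 * q * r + r : ℤ) ≤ ∑ a, (f a : ℤ) ^ 2 := by
  set d : Fin A → ℤ := fun a => (f a : ℤ) - q with hd
  have hsum : ∑ a, d a = r := by
    simp only [hd, Finset.sum_sub_distrib]
    have : (∑ a, (f a : ℤ)) = (A : ℤ) * q + r := by exact_mod_cast congrArg (Nat.cast : ℕ → ℤ) hs
    simp [this, Finset.card_univ]
  have hdsq : ∀ a, d a ≤ (d a) ^ 2 := by
    intro a
    rcases le_or_gt (d a) 0 with h | h
    · nlinarith [sq_nonneg (d a)]
    · have : 1 ≤ d a := h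
      nlinarith
  have h1 : (r : ℤ) ≤ ∑ a, (d a) ^ 2 := by
    rw [← hsum]; exact Finset.sum_le_sum fun a _ => hdsq a
  have h2 : ∑ a, (f a : ℤ) ^ 2 = ∑ a, (d a) ^ 2 + 2 * q * (r : ℤ) + A * q ^ 2 := by
    have : ∀ a : Fin A, (f a : ℤ) ^ 2 = (d a) ^ 2 + 2 * q * (d a) + q ^ 2 := by
      intro a; simp [hd]; ring
    rw [Finset.sum_congr rfl fun a _ => this a, Finset.sum_add_distrib,
      Finset.sum_add_distrib, ← Finset.mul_sum, hsum]
    simp [Finset.card_univ]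
  linarith

lemma fiber_sum (n A : ℕ) (y : Fin n → Fin A) :
    ∑ a, (univ.filter fun i => y i = a).card = n := by
  rw [← Finset.card_eq_sum_card_fiberwise (fun i _ => Finset.mem_univ (y i))]
  simp

lemma count_pairs (n A : ℕ) (y : Fin n → Fin A) :
    ((univ : Finset (Fin n × Fin n)).filter (fun p => y p.1 = y p.2)).card
      = ∑ a, ((univ.filter fun i => y i = a).card) ^ 2 := by
  rw [Finset.card_eq_sum_card_fiberwise
    (f := fun p : Fin n × Fin n => y p.1) (t := univ) (fun p _ => Finset.mem_univ _)]
  refine Finset.sum_congr rfl fun a _ => ?_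
  rw [Finset.filter_filter]
  have : ((univ : Finset (Fin n × Fin n)).filter fun p => y p.1 = y p.2 ∧ y p.1 = a)
      = (univ.filter fun i => y i = a) ×ˢ (univ.filter fun i => y i = a) := by
    ext p
    simp only [Finset.mem_filter, Finset.mem_univ, true_and, Finset.mem_product]
    constructor
    · rintro ⟨h1, h2⟩; exact ⟨h2, h1 ▸ h2⟩
    · rintro ⟨h1, h2⟩; exact ⟨h1.trans h2.symm, h1⟩
  rw [this, Finset.card_product]; ring

lemma split_sym (n : ℕ) (P : Fin n → Fin n → Prop) [DecidableEq (Fin n)]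
    [∀ i j, Decidable (P i j)] (hsym : ∀ i j, P i j → P j i) (hrefl : ∀ i, P i i) :
    ((univ : Finset (Fin n × Fin n)).filter (fun p => P p.1 p.2)).card
      = 2 * ((univ : Finset (Fin n × Fin n)).filter (fun p => p.1 < p.2 ∧ P p.1 p.2)).card + n := by
  classical
  set D := (univ : Finset (Fin n × Fin n)).filter (fun p => P p.1 p.2) with hD
  have h1 : (D.filter fun p => p.1 < p.2).card + (D.filter fun p => ¬ p.1 < p.2).card = D.card :=
    Finset.card_filter_add_card_filter_not _
  have h2 : ((D.filter fun p => ¬ p.1 < p.2).filter fun p => p.2 < p.1).card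
      + ((D.filter fun p => ¬ p.1 < p.2).filter fun p => ¬ p.2 < p.1).card
      = (D.filter fun p => ¬ p.1 < p.2).card :=
    Finset.card_filter_add_card_filter_not _
  have hlt : D.filter (fun p => p.1 < p.2)
      = (univ : Finset (Fin n × Fin n)).filter (fun p => p.1 < p.2 ∧ P p.1 p.2) := by
    rw [hD, Finset.filter_filter]
    exact Finset.filter_congr fun p _ => by tauto
  have hgt : ((D.filter fun p => ¬ p.1 < p.2).filter fun p => p.2 < p.1).card
      = ((univ : Finset (Fin n × Fin n)).filter (fun p => p.1 < p.2 ∧ P p.1 p.2)).card := by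
    apply Finset.card_nbij' (fun p => (p.2, p.1)) (fun p => (p.2, p.1))
    · intro p hp
      simp only [hD, Finset.mem_coe, Finset.mem_filter, Finset.mem_univ, true_and] at hp ⊢
      exact ⟨hp.2, hsym _ _ hp.1.1⟩
    · intro p hp
      simp only [hD, Finset.mem_coe, Finset.mem_filter, Finset.mem_univ, true_and] at hp ⊢
      exact ⟨⟨hsym _ _ hp.2, not_lt_of_gt hp.1⟩, hp.1⟩
    · intro p _; rfl
    · intro p _; rfl
  have hdiag : ((D.filter fun p => ¬ p.1 < p.2).filter fun p => ¬ p.2 < p.1).card = n := by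
    have he : ((D.filter fun p => ¬ p.1 < p.2).filter fun p => ¬ p.2 < p.1)
        = (univ : Finset (Fin n)).image (fun i => (i, i)) := by
      ext p
      simp only [hD, Finset.mem_filter, Finset.mem_univ, true_and, Finset.mem_image]
      constructor
      · rintro ⟨⟨hP, h1⟩, h2⟩
        refine ⟨p.1, ?_⟩
        have : p.1 = p.2 := le_antisymm (not_lt.mp h2) (not_lt.mp h1)
        cases p; simp_all
      · rintro ⟨i, rfl⟩
        exact ⟨⟨hrefl i, lt_irrefl i⟩, lt_irrefl i⟩
    rw [he, Finset.card_image_of_injective _ (fun a b h => (Prod.ext_iff.mp h).1)]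
    simp
  rw [← h1, ← h2, hlt, hgt, hdiag]
  ring

/-- Let `q = ⌊n/A⌋` and `r = n mod A`. For every family `x` of `n ≥ 2`
strings of length `L` over an alphabet of size `A`, the total pairwise overlap satisfies
`2·∑_{i<j} O(i,j) ≥ L·((A − r)·q² + r·(q+1)² − n)`; equivalently, the average pairwise
overlap `n̄_w = (∑_{i<j} O(i,j))/C(n,2)` satisfies
`n̄_w ≥ (L/(n(n−1)))·((A − r)·q² + r·(q+1)² − n)`. -/
theorem stmt5 (n L A : ℕ) (hn : 2 ≤ n) (hL : 0 < L) (hA : 0 < A)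
    (q r : ℕ) (hq : q = n / A) (hr : r = n % A)
    (x : Fin n → Fin L → Fin A)
    (O : Fin n → Fin n → ℕ)
    (hO : ∀ i j : Fin n, O i j = (Finset.univ.filter (fun ℓ : Fin L => x i ℓ = x j ℓ)).card) :
    L * ((A - r) * q ^ 2 + r * (q + 1) ^ 2 - n)
      ≤ 2 * ∑ p ∈ Finset.univ.filter (fun p : Fin n × Fin n => p.1 < p.2), O p.1 p.2 ∧
    (L : ℚ) / ((n : ℚ) * ((n : ℚ) - 1))
        * (((A - r) * q ^ 2 + r * (q + 1) ^ 2 : ℕ) - (n : ℚ))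
      ≤ ((∑ p ∈ Finset.univ.filter (fun p : Fin n × Fin n => p.1 < p.2), O p.1 p.2 : ℕ) : ℚ)
          / (n.choose 2 : ℚ) := by
  classical
  set F := (univ : Finset (Fin n × Fin n)).filter (fun p => p.1 < p.2) with hF
  set S := ∑ p ∈ F, O p.1 p.2 with hS
  have hS2 : S = ∑ ℓ : Fin L, (F.filter (fun p => x p.1 ℓ = x p.2 ℓ)).card := by
    rw [hS, Finset.sum_congr rfl (fun p _ => hO p.1 p.2)]
    simp only [Finset.card_filter]
    rw [Finset.sum_comm]
  have key : ∀ ℓ : Fin L, (A * q ^ 2 + 2 * q * r + r : ℤ)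
      ≤ 2 * ((F.filter (fun p => x p.1 ℓ = x p.2 ℓ)).card : ℤ) + n := by
    intro ℓ
    have h1 := count_pairs n A (fun i => x i ℓ)
    have h2 := fiber_sum n A (fun i => x i ℓ)
    have h3 := split_sym n (fun i j => x i ℓ = x j ℓ) (fun i j h => h.symm) (fun i => rfl)
    have h4 := key_int A q r (fun a => (univ.filter fun i => x i ℓ = a).card) (by
      rw [h2, hq, hr]; exact (Nat.div_add_mod n A).symm)
    have h5 : F.filter (fun p => x p.1 ℓ = x p.2 ℓ)
        = (univ : Finset (Fin n × Fin n)).filter (fun p => p.1 < p.2 ∧ x p.1 ℓ = x p.2 ℓ) := by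
      rw [hF, Finset.filter_filter]
    have h6 : ((univ : Finset (Fin n × Fin n)).filter (fun p => x p.1 ℓ = x p.2 ℓ)).card
        = 2 * (F.filter (fun p => x p.1 ℓ = x p.2 ℓ)).card + n := by rw [h5]; exact h3
    have h7 : (((univ : Finset (Fin n × Fin n)).filter
        (fun p => x p.1 ℓ = x p.2 ℓ)).card : ℤ)
        = ∑ a, (((univ.filter fun i => x i ℓ = a).card : ℤ)) ^ 2 := by
      rw [h1]; push_cast; rfl
    rw [← h7, h6] at h4
    push_cast at h4 ⊢
    linarith
  have main : (L : ℤ) * (A * q ^ 2 + 2 * q * r + r) ≤ 2 * S + n * L := by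
    have : (L : ℤ) * (A * q ^ 2 + 2 * q * r + r)
        = ∑ _ℓ : Fin L, (A * q ^ 2 + 2 * q * r + r : ℤ) := by
      simp [Finset.card_univ]
    rw [this]
    have h8 : (∑ _ℓ : Fin L, (A * q ^ 2 + 2 * q * r + r : ℤ))
        ≤ ∑ ℓ : Fin L, (2 * ((F.filter (fun p => x p.1 ℓ = x p.2 ℓ)).card : ℤ) + n) :=
      Finset.sum_le_sum fun ℓ _ => key ℓ
    refine h8.trans (le_of_eq ?_)
    rw [Finset.sum_add_distrib, ← Finset.mul_sum]
    have : ((S : ℤ)) = ∑ ℓ : Fin L, ((F.filter (fun p => x p.1 ℓ = x p.2 ℓ)).card : ℤ) := by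
      rw [hS2]; push_cast; rfl
    rw [← this]
    simp [Finset.card_univ]; ring
  have hrA : r ≤ A := hr ▸ le_of_lt (Nat.mod_lt n hA)
  obtain ⟨s, hsA⟩ := Nat.exists_eq_add_of_le hrA
  have hK : (A - r) * q ^ 2 + r * (q + 1) ^ 2 = A * q ^ 2 + 2 * q * r + r := by
    subst hsA; simp [Nat.add_sub_cancel_left]; ring
  constructor
  · rw [hK]
    rcases le_or_gt n (A * q ^ 2 + 2 * q * r + r) with h | h
    · have : (L : ℤ) * ((A * q ^ 2 + 2 * q * r + r : ℕ) - (n : ℕ) : ℕ) ≤ 2 * S := by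
        push_cast [Nat.cast_sub h]
        linarith
      exact_mod_cast this
    · rw [Nat.sub_eq_zero_of_le h.le]; simp
  · have hn2 : (2 : ℚ) ≤ (n : ℚ) := by exact_mod_cast hn
    have hD : (0 : ℚ) < (n : ℚ) * ((n : ℚ) - 1) := by nlinarith
    have hch : ((n.choose 2 : ℕ) : ℚ) = (n : ℚ) * ((n : ℚ) - 1) / 2 := by
      rw [Nat.cast_choose_two]
    have mainQ : (L : ℚ) * (A * q ^ 2 + 2 * q * r + r) ≤ 2 * S + n * L := by
      exact_mod_cast main
    have hKQ : (((A - r) * q ^ 2 + r * (q + 1) ^ 2 : ℕ) : ℚ)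
        = (A : ℚ) * q ^ 2 + 2 * q * r + r := by rw [hK]; push_cast; ring
    rw [hch, hKQ, div_mul_eq_mul_div, div_le_div_iff₀ hD (by positivity)]
    nlinarith [mul_le_mul_of_nonneg_right
      (show (L : ℚ) * ((A : ℚ) * q ^ 2 + 2 * q * r + r) - L * n ≤ 2 * S by linarith)
      (le_of_lt (half_pos hD))]
end

section
/- For natural numbers N, m, s with 1 ≤ m, 1 ≤ s and m + s ≤ N − 1, one has ∑_{d=m+s}^{N−1} (N − d)·C(d − m − 1, s − 1) = (N − m)·C(N − 1 − m, s) − s·C(N − m, s + 1). -/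
lemma aux (t : ℕ) : ∀ M : ℕ, t ≤ M →
    ∑ k ∈ Finset.Icc t M, ((M : ℤ) + 1 - k) * ((k.choose t : ℕ) : ℤ)
      = ((M : ℤ) + 2) * (((M + 1).choose (t + 1) : ℕ) : ℤ)
        - ((t : ℤ) + 1) * (((M + 2).choose (t + 2) : ℕ) : ℤ) := by
  intro M
  induction M with
  | zero =>
    intro h
    interval_cases t
    simp
  | succ M ih =>
    intro h
    rcases Nat.lt_or_ge t (M + 1) with h' | h'
    · have ht : t ≤ M := Nat.lt_succ_iff.mp h'
      rw [Finset.sum_Icc_succ_top (by omega : t ≤ M + 1)]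
      have split : ∑ k ∈ Finset.Icc t M, ((M : ℤ) + 1 + 1 - k) * ((k.choose t : ℕ) : ℤ)
          = (∑ k ∈ Finset.Icc t M, ((M : ℤ) + 1 - k) * ((k.choose t : ℕ) : ℤ))
            + ∑ k ∈ Finset.Icc t M, ((k.choose t : ℕ) : ℤ) := by
        rw [← Finset.sum_add_distrib]
        apply Finset.sum_congr rfl
        intro k _
        ring
      have hs : ∑ k ∈ Finset.Icc t M, ((k.choose t : ℕ) : ℤ)
          = (((M + 1).choose (t + 1) : ℕ) : ℤ) := by
        rw [← Nat.cast_sum]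
        rw [Nat.sum_Icc_choose]
      push_cast
      push_cast at split hs
      rw [split, ih ht, hs]
      -- now a pure identity with choose numbers
      have pascal1 : ((M + 2).choose (t + 1) : ℤ) = (M + 1).choose t + (M + 1).choose (t + 1) := by
        rw [Nat.choose_succ_succ (M + 1) t]; push_cast; ring
      have pascal2 : ((M + 3).choose (t + 2) : ℤ) = (M + 2).choose (t + 1) + (M + 2).choose (t + 2) := by
        rw [Nat.choose_succ_succ (M + 2) (t + 1)]; push_cast; ring
      have key : ((M + 2).choose (t + 1) : ℤ) * ((t : ℤ) + 1) = ((M : ℤ) + 2) * (M + 1).choose t := by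
        have := Nat.add_one_mul_choose_eq (M + 1) t
        exact_mod_cast (congrArg (Nat.cast : ℕ → ℤ) this).symm
      have hMc : ((M + 1 + 1 + 1).choose (t + 2) : ℤ) = ((M + 3).choose (t + 2) : ℤ) := by norm_num
      have hMc2 : ((M + 1 + 1).choose (t + 1) : ℤ) = ((M + 2).choose (t + 1) : ℤ) := by norm_num
      rw [hMc, hMc2, pascal1, pascal2]
      linarith
    · have ht : t = M + 1 := by omega
      subst ht
      rw [show Finset.Icc (M + 1) (M + 1) = {M + 1} from Finset.Icc_self _]
      rw [Finset.sum_singleton]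
      rw [show (M + 1 + 1).choose (M + 1 + 1) = 1 from Nat.choose_self _,
        show (M + 1 + 2).choose (M + 1 + 2) = 1 from Nat.choose_self _,
        Nat.choose_self]
      push_cast; ring

/-- For natural numbers `N, m, s` with `1 ≤ m`, `1 ≤ s`, `m + s ≤ N − 1`:
`∑_{d=m+s}^{N−1} (N − d)·C(d − m − 1, s − 1) = (N − m)·C(N − 1 − m, s) − s·C(N − m, s + 1)`. -/
theorem stmt7 (N m s : ℕ) (hm : 1 ≤ m) (hs : 1 ≤ s) (h : m + s ≤ N - 1) :
    ∑ d ∈ Finset.Icc (m + s) (N - 1), ((N : ℤ) - (d : ℤ)) * ((d - m - 1).choose (s - 1) : ℤ)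
      = ((N - m : ℕ) : ℤ) * ((N - 1 - m).choose s : ℤ)
          - (s : ℤ) * ((N - m).choose (s + 1) : ℤ) := by
  obtain ⟨t, rfl⟩ : ∃ t, s = t + 1 := ⟨s - 1, by omega⟩
  obtain ⟨M, rfl⟩ : ∃ M, N = M + m + 2 := ⟨N - m - 2, by omega⟩
  have htM : t ≤ M := by omega
  have hIcc : Finset.Icc (m + (t + 1)) (M + m + 2 - 1)
      = (Finset.Icc t M).map (addRightEmbedding (m + 1)) := by
    rw [Finset.map_add_right_Icc]
    congr 1 <;> omega
  rw [hIcc, Finset.sum_map]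
  simp only [addRightEmbedding_apply]
  have e1 : ∀ k, k + (m + 1) - m - 1 = k := by intro k; omega
  have e2 : t + 1 - 1 = t := by omega
  have e3 : M + m + 2 - m = M + 2 := by omega
  have e4 : M + m + 2 - 1 - m = M + 1 := by omega
  simp only [e1, e2, e3, e4]
  have hL : ∑ k ∈ Finset.Icc t M, (((M + m + 2 : ℕ) : ℤ) - ((k + (m + 1) : ℕ) : ℤ)) * (k.choose t : ℤ)
      = ∑ k ∈ Finset.Icc t M, ((M : ℤ) + 1 - k) * ((k.choose t : ℕ) : ℤ) := by
    apply Finset.sum_congr rfl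
    intro k _
    push_cast
    ring
  rw [hL, aux t M htM]
  push_cast
  ring
end

section
/- In the ring of formal power series ℝ[[X]], let F = X + ρ·X²·(1 − X)⁻¹ (i.e. F = X + ρ·∑_{q≥2} X^q). Then for every m ≥ 1: the coefficient of X^m in F^m equals 1, and for every d > m the coefficient of X^d in F^m equals ∑_{s=1}^{min(m, d−m)} C(m, s)·ρ^s·C(d − m − 1, s − 1). -/
open PowerSeries Finset

private lemma aux_key (ρ : ℝ) (m : ℕ) (k : ℕ) :
    PowerSeries.coeff k
      ((PowerSeries.X * (1 + PowerSeries.C ρ * PowerSeries.X *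
        (PowerSeries.invOneSubPow ℝ 1).val)) ^ m)
    = (if k = m then (1:ℝ) else 0) +
      ∑ i ∈ Finset.range m, (m.choose (i+1) : ℝ) * ρ ^ (i+1) *
        (if m + (i+1) ≤ k then (((k - m - 1).choose i : ℕ) : ℝ) else 0) := by
  set V := (PowerSeries.invOneSubPow ℝ 1).val with hVdef
  have hV1 : V * (1 - PowerSeries.X) = 1 := by
    have h := (PowerSeries.invOneSubPow ℝ 1).val_inv
    rwa [PowerSeries.invOneSubPow_inv_eq_one_sub_pow, pow_one] at h
  have hVs : ∀ s : ℕ, V ^ s = (PowerSeries.invOneSubPow ℝ s).val := by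
    intro s
    have h2 : (PowerSeries.invOneSubPow ℝ s).val * (1 - PowerSeries.X) ^ s = 1 := by
      have h := (PowerSeries.invOneSubPow ℝ s).val_inv
      rwa [PowerSeries.invOneSubPow_inv_eq_one_sub_pow] at h
    have h1 : V ^ s * (1 - PowerSeries.X) ^ s = 1 := by
      rw [← mul_pow, hV1, one_pow]
    calc V ^ s = V ^ s * ((PowerSeries.invOneSubPow ℝ s).val * (1 - PowerSeries.X) ^ s) := by
            rw [h2, mul_one]
      _ = (PowerSeries.invOneSubPow ℝ s).val * (V ^ s * (1 - PowerSeries.X) ^ s) := by ring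
      _ = (PowerSeries.invOneSubPow ℝ s).val := by rw [h1, mul_one]
  rw [mul_pow, add_comm (1 : PowerSeries ℝ), add_pow, Finset.mul_sum, map_sum,
    Finset.sum_range_succ']
  simp only [one_pow, pow_zero, one_mul, Nat.choose_zero_right, Nat.cast_one, mul_one]
  rw [add_comm, PowerSeries.coeff_X_pow]
  congr 1
  refine Finset.sum_congr rfl fun i _ => ?_
  have hG : (PowerSeries.C ρ * PowerSeries.X * V) ^ (i+1)
      = PowerSeries.C (ρ ^ (i+1)) * (PowerSeries.X ^ (i+1) * V ^ (i+1)) := by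
    rw [mul_pow, mul_pow, map_pow]; ring
  have hterm : PowerSeries.X ^ m *
        ((PowerSeries.C ρ * PowerSeries.X * V) ^ (i+1) *
          (m.choose (i+1) : PowerSeries ℝ))
      = PowerSeries.C (ρ ^ (i+1) * (m.choose (i+1) : ℝ)) *
          (PowerSeries.X ^ (m + (i+1)) * V ^ (i+1)) := by
    rw [hG, pow_add, ← map_natCast (PowerSeries.C (R := ℝ)) (m.choose (i+1))]
    simp only [map_mul, map_pow]
    ring
  rw [hterm, PowerSeries.coeff_C_mul, hVs (i+1),
    PowerSeries.invOneSubPow_val_succ_eq_mk_add_choose,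
    PowerSeries.coeff_X_pow_mul']
  by_cases h : m + (i+1) ≤ k
  · rw [if_pos h, if_pos h, PowerSeries.coeff_mk]
    have : i + (k - (m + (i+1))) = k - m - 1 := by omega
    rw [this]; ring
  · rw [if_neg h, if_neg h]; ring

/-- In `ℝ[[X]]`, let `F = X + ρ·X²·(1 − X)⁻¹`. Then for `m ≥ 1`:
the coefficient of `X^m` in `F^m` equals `1`, and for `d > m` the coefficient of `X^d`
in `F^m` equals `∑_{s=1}^{min(m, d−m)} C(m, s)·ρ^s·C(d − m − 1, s − 1)`. -/
theorem stmt12 (ρ : ℝ) (F : PowerSeries ℝ)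
    (hF : F = PowerSeries.X + PowerSeries.C ρ * PowerSeries.X ^ 2 *
      (1 - PowerSeries.X)⁻¹)
    (m : ℕ) (hm : 1 ≤ m) :
    PowerSeries.coeff m (F ^ m) = 1 ∧
    ∀ d : ℕ, m < d →
      PowerSeries.coeff d (F ^ m)
        = ∑ s ∈ Finset.Icc 1 (min m (d - m)),
            (m.choose s : ℝ) * ρ ^ s * ((d - m - 1).choose (s - 1) : ℝ) := by
  have hVinv : (1 - PowerSeries.X : PowerSeries ℝ)⁻¹ = (PowerSeries.invOneSubPow ℝ 1).val := by
    symm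
    rw [PowerSeries.eq_inv_iff_mul_eq_one]
    · have h := (PowerSeries.invOneSubPow ℝ 1).val_inv
      rwa [PowerSeries.invOneSubPow_inv_eq_one_sub_pow, pow_one] at h
    · simp
  have hFX : F = PowerSeries.X * (1 + PowerSeries.C ρ * PowerSeries.X *
      (PowerSeries.invOneSubPow ℝ 1).val) := by
    rw [hF, hVinv]; ring
  constructor
  · rw [hFX, aux_key]
    rw [if_pos rfl]
    have : ∀ i ∈ Finset.range m, (m.choose (i+1) : ℝ) * ρ ^ (i+1) *
        (if m + (i+1) ≤ m then (((m - m - 1).choose i : ℕ) : ℝ) else 0) = 0 := by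
      intro i _
      rw [if_neg (by omega)]; ring
    rw [Finset.sum_congr rfl this, Finset.sum_const_zero, add_zero]
  · intro d hd
    rw [hFX, aux_key, if_neg (by omega), zero_add]
    rw [show Finset.Icc 1 (min m (d - m)) = Finset.Ico 1 (min m (d - m) + 1) from
      (Finset.Ico_add_one_right_eq_Icc 1 _).symm, Finset.sum_Ico_eq_sum_range]
    have hcard : min m (d - m) + 1 - 1 = min m (d - m) := by omega
    rw [hcard]
    rcases le_or_gt m (d - m) with hmd | hmd
    · rw [min_eq_left hmd]
      refine Finset.sum_congr rfl fun i hi => ?_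
      rw [Finset.mem_range] at hi
      rw [if_pos (by omega)]
      have h1 : 1 + i = i + 1 := by omega
      have h2 : i + 1 - 1 = i := by omega
      rw [h1, h2]
    · rw [min_eq_right (le_of_lt hmd)]
      rw [← Finset.sum_subset (Finset.range_subset_range.mpr (le_of_lt hmd))
        (fun i _ hi => by
          rw [Finset.mem_range, not_lt] at hi
          rw [if_neg (by omega), mul_zero])]
      refine Finset.sum_congr rfl fun i hi => ?_
      rw [Finset.mem_range] at hi
      rw [if_pos (by omega)]
      have h1 : 1 + i = i + 1 := by omega
      have h2 : i + 1 - 1 = i := by omega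
      rw [h1, h2]
end

section
/- For every ρ ∈ ℝ and every m with 1 ≤ m ≤ N − 1, the sum of all entries of A(ρ)^m satisfies g_m = ∑_{s=0}^{m} C(m, s)·ρ^s·C(N − m, s + 1). -/
open Finset

/-- Closed-form value of the `(i,j)` entry of `A(ρ)^m`, as a function of `d = j - i`. -/
noncomputable def stmt13Pf (ρ : ℝ) (m d : ℕ) : ℝ :=
  if d = m then 1
  else if m < d then
    ∑ s ∈ Finset.range m, (m.choose (s + 1) : ℝ) * ρ ^ (s + 1) * ((d - m - 1).choose s : ℝ)
  else 0

lemma stmt13Pf_of_lt (ρ : ℝ) {m d : ℕ} (h : d < m) : stmt13Pf ρ m d = 0 := by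
  rw [stmt13Pf, if_neg (by omega), if_neg (by omega)]

lemma stmt13Pf_self (ρ : ℝ) (m : ℕ) : stmt13Pf ρ m m = 1 := by
  rw [stmt13Pf, if_pos rfl]

lemma stmt13Pf_of_gt (ρ : ℝ) {m d : ℕ} (h : m < d) :
    stmt13Pf ρ m d =
      ∑ s ∈ Finset.range m, (m.choose (s + 1) : ℝ) * ρ ^ (s + 1) * ((d - m - 1).choose s : ℝ) := by
  rw [stmt13Pf, if_neg (by omega), if_pos h]

/-- Hockey-stick identity, `range` version. -/
lemma stmt13_hockey (n s : ℕ) : ∑ t ∈ Finset.range n, t.choose s = n.choose (s + 1) := by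
  induction n with
  | zero => simp
  | succ n ih =>
    rw [Finset.sum_range_succ, ih, Nat.choose_succ_succ]
    simp only [Nat.succ_eq_add_one]
    omega

lemma stmt13_dbl (K s : ℕ) :
    ∑ t ∈ Finset.range K, (K - t) * t.choose s = (K + 1).choose (s + 2) := by
  induction K with
  | zero =>
    rw [Finset.range_zero, Finset.sum_empty, eq_comm]
    exact Nat.choose_eq_zero_of_lt (by omega)
  | succ K ih =>
    have h1 : ∀ t ∈ Finset.range (K + 1),
        (K + 1 - t) * t.choose s = (K - t) * t.choose s + t.choose s := by
      intro t ht
      rw [Finset.mem_range] at ht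
      rw [show K + 1 - t = (K - t) + 1 by omega]
      ring
    rw [Finset.sum_congr rfl h1, Finset.sum_add_distrib,
      Finset.sum_range_succ (fun t => (K - t) * t.choose s), Nat.sub_self, zero_mul, add_zero,
      ih, stmt13_hockey, Nat.choose_succ_succ (K + 1) (s + 1)]
    simp only [Nat.succ_eq_add_one]
    rw [show s + 1 + 1 = s + 2 from rfl]
    omega

/-- The recursion satisfied by `stmt13Pf` in `m`. -/
lemma stmt13Pf_rec (ρ : ℝ) (m d : ℕ) (hm : 1 ≤ m) :
    stmt13Pf ρ (m + 1) d
      = stmt13Pf ρ m (d - 1) + ρ * ∑ e ∈ Finset.range (d - 1), stmt13Pf ρ m e := by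
  rcases lt_trichotomy d (m + 1) with h | h | h
  · rw [stmt13Pf_of_lt ρ h, stmt13Pf_of_lt ρ (show d - 1 < m by omega),
      Finset.sum_eq_zero, mul_zero, add_zero]
    intro e he
    rw [Finset.mem_range] at he
    exact stmt13Pf_of_lt ρ (by omega)
  · subst h
    rw [stmt13Pf_self, Nat.add_sub_cancel, stmt13Pf_self, Finset.sum_eq_zero, mul_zero, add_zero]
    intro e he
    rw [Finset.mem_range] at he
    exact stmt13Pf_of_lt ρ (by omega)
  · -- main case : m + 1 < d
    obtain ⟨D, hD⟩ : ∃ D, d = m + 1 + D ∧ 1 ≤ D := by exact ⟨d - m - 1, by omega, by omega⟩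
    obtain ⟨rfl, hD1⟩ := hD
    obtain ⟨D', rfl⟩ : ∃ D', D = D' + 1 := ⟨D - 1, by omega⟩
    have harg : m + 1 + (D' + 1) - (m + 1) - 1 = D' := by omega
    have harg2 : m + 1 + (D' + 1) - 1 - m - 1 = D' := by omega
    have harg3 : m + 1 + (D' + 1) - 1 = m + (D' + 1) := by omega
    have hz : ∑ e ∈ Finset.range m, stmt13Pf ρ m e = 0 :=
      Finset.sum_eq_zero fun e he =>
        stmt13Pf_of_lt ρ (Finset.mem_range.mp he)
    have hPf0 : stmt13Pf ρ m (m + 0) = 1 := by rw [Nat.add_zero, stmt13Pf_self]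
    have hPft : ∀ t ∈ Finset.range D', stmt13Pf ρ m (m + (t + 1))
        = ∑ s ∈ Finset.range m, (m.choose (s + 1) : ℝ) * ρ ^ (s + 1) * (t.choose s : ℝ) := by
      intro t _
      rw [stmt13Pf_of_gt ρ (show m < m + (t + 1) by omega),
        show m + (t + 1) - m - 1 = t by omega]
    have h4 : ∀ s ∈ Finset.range m,
        ∑ t ∈ Finset.range D', (m.choose (s + 1) : ℝ) * ρ ^ (s + 1) * (t.choose s : ℝ)
          = (m.choose (s + 1) : ℝ) * ρ ^ (s + 1) * (D'.choose (s + 1) : ℝ) := by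
      intro s _
      rw [← Finset.mul_sum, ← Nat.cast_sum, stmt13_hockey]
    have hR : ∑ e ∈ Finset.range (m + (D' + 1)), stmt13Pf ρ m e
        = (∑ s ∈ Finset.range m,
            (m.choose (s + 1) : ℝ) * ρ ^ (s + 1) * (D'.choose (s + 1) : ℝ)) + 1 := by
      rw [Finset.sum_range_add, hz, zero_add, Finset.sum_range_succ', hPf0,
        Finset.sum_congr rfl hPft, Finset.sum_comm, Finset.sum_congr rfl h4]
    rw [stmt13Pf_of_gt ρ (show m + 1 < m + 1 + (D' + 1) by omega),
      stmt13Pf_of_gt ρ (show m < m + 1 + (D' + 1) - 1 by omega), harg, harg2, harg3, hR]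
    -- LHS: split the Pascal triangle recursion
    have hL : ∀ s ∈ Finset.range (m + 1),
        ((m + 1).choose (s + 1) : ℝ) * ρ ^ (s + 1) * (D'.choose s : ℝ)
          = (m.choose s : ℝ) * ρ ^ (s + 1) * (D'.choose s : ℝ)
            + (m.choose (s + 1) : ℝ) * ρ ^ (s + 1) * (D'.choose s : ℝ) := by
      intro s _
      rw [Nat.choose_succ_succ]
      push_cast
      ring
    rw [Finset.sum_congr rfl hL, Finset.sum_add_distrib]
    -- second sum : drop last (vanishing) term
    have h2 : ∑ s ∈ Finset.range (m + 1),
        (m.choose (s + 1) : ℝ) * ρ ^ (s + 1) * (D'.choose s : ℝ)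
        = ∑ s ∈ Finset.range m, (m.choose (s + 1) : ℝ) * ρ ^ (s + 1) * (D'.choose s : ℝ) := by
      rw [Finset.sum_range_succ, Nat.choose_succ_self]
      simp
    -- first sum : peel off s = 0
    have h3 : ∑ s ∈ Finset.range (m + 1),
        (m.choose s : ℝ) * ρ ^ (s + 1) * (D'.choose s : ℝ)
        = (∑ s ∈ Finset.range m,
            (m.choose (s + 1) : ℝ) * ρ ^ (s + 2) * (D'.choose (s + 1) : ℝ)) + ρ := by
      rw [Finset.sum_range_succ']
      norm_num
    rw [h2, h3, mul_add, mul_one, Finset.mul_sum]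
    have h5 : ∀ s ∈ Finset.range m,
        ρ * ((m.choose (s + 1) : ℝ) * ρ ^ (s + 1) * (D'.choose (s + 1) : ℝ))
          = (m.choose (s + 1) : ℝ) * ρ ^ (s + 2) * (D'.choose (s + 1) : ℝ) := by
      intro s _; ring
    rw [Finset.sum_congr rfl h5]
    ring

lemma stmt13_shift (ρ : ℝ) (m : ℕ) (hm : 1 ≤ m) (i t : ℕ) :
    ∑ k ∈ Finset.range t, stmt13Pf ρ m (k - i) = ∑ e ∈ Finset.range (t - i), stmt13Pf ρ m e := by
  rcases le_or_gt t i with h | h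
  · rw [show t - i = 0 by omega, Finset.range_zero, Finset.sum_empty]
    apply Finset.sum_eq_zero
    intro k hk
    rw [Finset.mem_range] at hk
    rw [show k - i = 0 by omega]
    exact stmt13Pf_of_lt ρ (by omega)
  · obtain ⟨u, rfl⟩ : ∃ u, t = i + u := ⟨t - i, by omega⟩
    rw [Nat.add_sub_cancel_left, Finset.sum_range_add]
    have hz : ∑ k ∈ Finset.range i, stmt13Pf ρ m (k - i) = 0 := by
      apply Finset.sum_eq_zero
      intro k hk
      rw [Finset.mem_range] at hk
      rw [show k - i = 0 by omega]
      exact stmt13Pf_of_lt ρ (by omega)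
    rw [hz, zero_add]
    exact Finset.sum_congr rfl fun e _ => by rw [Nat.add_sub_cancel_left]

/-- The key step of the induction, at the level of natural-number indices. -/
lemma stmt13_key (ρ : ℝ) (m : ℕ) (hm : 1 ≤ m) (N i j : ℕ) (hj : j < N) :
    ∑ k ∈ Finset.range N,
        stmt13Pf ρ m (k - i) * (if j = k + 1 then (1 : ℝ) else if k + 2 ≤ j then ρ else 0)
      = stmt13Pf ρ (m + 1) (j - i) := by
  rw [stmt13Pf_rec ρ m (j - i) hm]
  have hsub : Finset.range j ⊆ Finset.range N := Finset.range_subset_range.mpr (by omega)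
  rw [← Finset.sum_subset hsub (by
    intro k hk hk2
    rw [Finset.mem_range] at hk
    rw [Finset.mem_range] at hk2
    rw [if_neg (by omega), if_neg (by omega), mul_zero])]
  rcases Nat.eq_zero_or_pos j with h0 | hpos
  · subst h0
    rw [Finset.range_zero, Finset.sum_empty, Nat.zero_sub, Nat.zero_sub, Finset.range_zero,
      Finset.sum_empty, mul_zero, stmt13Pf_of_lt ρ (by omega), add_zero]
  · obtain ⟨j', rfl⟩ : ∃ j', j = j' + 1 := ⟨j - 1, by omega⟩
    rw [Finset.sum_range_succ, if_pos rfl, mul_one]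
    have hmain : ∀ k ∈ Finset.range j',
        stmt13Pf ρ m (k - i) * (if j' + 1 = k + 1 then (1 : ℝ) else if k + 2 ≤ j' + 1 then ρ else 0)
          = stmt13Pf ρ m (k - i) * ρ := by
      intro k hk
      rw [Finset.mem_range] at hk
      rw [if_neg (by omega), if_pos (by omega)]
    rw [Finset.sum_congr rfl hmain, ← Finset.sum_mul, stmt13_shift ρ m hm i j',
      show j' + 1 - i - 1 = j' - i by omega]
    ring

/-- Entry formula for powers of `Amat`. -/
lemma stmt13_entry (N : ℕ) (ρ : ℝ) (Amat : Matrix (Fin N) (Fin N) ℝ)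
    (hAmat : ∀ i j : Fin N, Amat i j =
      if (j : ℕ) = (i : ℕ) + 1 then 1 else if (i : ℕ) + 2 ≤ (j : ℕ) then ρ else 0)
    (m : ℕ) (hm : 1 ≤ m) :
    ∀ i j : Fin N, (Amat ^ m) i j = stmt13Pf ρ m ((j : ℕ) - (i : ℕ)) := by
  induction m, hm using Nat.le_induction with
  | base =>
    intro i j
    rw [pow_one, hAmat i j]
    split_ifs with h1 h2
    · rw [show (j : ℕ) - (i : ℕ) = 1 by omega, stmt13Pf_self]
    · rw [stmt13Pf_of_gt ρ (show 1 < (j : ℕ) - (i : ℕ) by omega)]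
      simp
    · rw [show (j : ℕ) - (i : ℕ) = 0 by omega, stmt13Pf_of_lt ρ (by omega)]
  | succ m hm ih =>
    intro i j
    rw [pow_succ, Matrix.mul_apply]
    have hterm : ∀ k : Fin N, (Amat ^ m) i k * Amat k j
        = (fun k : ℕ => stmt13Pf ρ m (k - (i : ℕ)) *
            (if (j : ℕ) = k + 1 then (1 : ℝ) else if k + 2 ≤ (j : ℕ) then ρ else 0)) (k : ℕ) := by
      intro k
      rw [ih i k, hAmat k j]
    rw [Finset.sum_congr rfl fun k _ => hterm k]
    exact (Fin.sum_univ_eq_sum_range (fun k : ℕ => stmt13Pf ρ m (k - (i : ℕ)) *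
        (if (j : ℕ) = k + 1 then (1 : ℝ) else if k + 2 ≤ (j : ℕ) then ρ else 0)) N).trans
      (stmt13_key ρ m hm N (i : ℕ) (j : ℕ) j.isLt)

/-- For every `ρ ∈ ℝ` and `1 ≤ m ≤ N − 1`, the sum of all entries of
`A(ρ)^m` satisfies `g_m = ∑_{s=0}^{m} C(m, s)·ρ^s·C(N − m, s + 1)`. -/
theorem stmt13 (N : ℕ) (hN : 0 < N) (ρ : ℝ)
    (Amat : Matrix (Fin N) (Fin N) ℝ)
    (hAmat : ∀ i j : Fin N, Amat i j =
      if (j : ℕ) = (i : ℕ) + 1 then 1 else if (i : ℕ) + 2 ≤ (j : ℕ) then ρ else 0)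
    (m : ℕ) (hm : 1 ≤ m) (hmN : m ≤ N - 1) :
    ∑ i : Fin N, ∑ j : Fin N, (Amat ^ m) i j
      = ∑ s ∈ Finset.range (m + 1),
          (m.choose s : ℝ) * ρ ^ s * ((N - m).choose (s + 1) : ℝ) := by
  have he := stmt13_entry N ρ Amat hAmat m hm
  have hmlt : m < N := by omega
  have step1 : ∑ i : Fin N, ∑ j : Fin N, (Amat ^ m) i j
      = ∑ i ∈ Finset.range N, ∑ j ∈ Finset.range N, stmt13Pf ρ m (j - i) := by
    have hinner : ∀ i : Fin N, ∑ j : Fin N, (Amat ^ m) i j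
        = (fun i : ℕ => ∑ j ∈ Finset.range N, stmt13Pf ρ m (j - i)) (i : ℕ) := by
      intro i
      rw [Finset.sum_congr rfl fun j _ => he i j,
        Fin.sum_univ_eq_sum_range (fun j => stmt13Pf ρ m (j - (i : ℕ)))]
    rw [Finset.sum_congr rfl fun i _ => hinner i,
      Fin.sum_univ_eq_sum_range (fun i => ∑ j ∈ Finset.range N, stmt13Pf ρ m (j - i))]
  rw [step1]
  have step2 : ∀ i ∈ Finset.range N, ∑ j ∈ Finset.range N, stmt13Pf ρ m (j - i)
      = ∑ e ∈ Finset.range (N - i), stmt13Pf ρ m e := fun i _ => stmt13_shift ρ m hm i N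
  rw [Finset.sum_congr rfl step2]
  -- swap the order of summation to count each difference with multiplicity N - e
  have hswap : ∑ i ∈ Finset.range N, ∑ e ∈ Finset.range (N - i), stmt13Pf ρ m e
      = ∑ e ∈ Finset.range N, ((N - e : ℕ) : ℝ) * stmt13Pf ρ m e := by
    have h1 : ∀ i ∈ Finset.range N, ∑ e ∈ Finset.range (N - i), stmt13Pf ρ m e
        = ∑ e ∈ Finset.range N, if i + e < N then stmt13Pf ρ m e else 0 := by
      intro i hi
      rw [Finset.mem_range] at hi
      rw [show Finset.range (N - i) = (Finset.range N).filter (fun e => i + e < N) by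
        ext e; simp [Finset.mem_filter, Finset.mem_range]; omega, Finset.sum_filter]
    rw [Finset.sum_congr rfl h1, Finset.sum_comm]
    apply Finset.sum_congr rfl
    intro e he
    rw [Finset.mem_range] at he
    rw [← Finset.sum_filter,
      show (Finset.range N).filter (fun i => i + e < N) = Finset.range (N - e) by
        ext i; simp [Finset.mem_filter, Finset.mem_range]; omega,
      Finset.sum_const, Finset.card_range, nsmul_eq_mul]
  rw [hswap]
  -- final binomial identity
  obtain ⟨K, rfl⟩ : ∃ K, N = m + (K + 1) := ⟨N - m - 1, by omega⟩
  rw [Finset.sum_range_add]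
  have hz : ∑ e ∈ Finset.range m, ((m + (K + 1) - e : ℕ) : ℝ) * stmt13Pf ρ m e = 0 :=
    Finset.sum_eq_zero fun e he => by
      rw [stmt13Pf_of_lt ρ (Finset.mem_range.mp he), mul_zero]
  rw [hz, zero_add, Finset.sum_range_succ']
  have hK0 : ((m + (K + 1) - (m + 0) : ℕ) : ℝ) * stmt13Pf ρ m (m + 0) = ((K + 1 : ℕ) : ℝ) := by
    rw [show m + (K + 1) - (m + 0) = K + 1 by omega, show m + 0 = m by omega,
      stmt13Pf_self, mul_one]
  rw [hK0]
  have hterm : ∀ t ∈ Finset.range K,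
      ((m + (K + 1) - (m + (t + 1)) : ℕ) : ℝ) * stmt13Pf ρ m (m + (t + 1))
        = ∑ s ∈ Finset.range m,
            (m.choose (s + 1) : ℝ) * ρ ^ (s + 1) * (((K - t) : ℕ) * (t.choose s : ℕ) : ℝ) := by
    intro t ht
    rw [show m + (K + 1) - (m + (t + 1)) = K - t by omega,
      stmt13Pf_of_gt ρ (show m < m + (t + 1) by omega),
      show m + (t + 1) - m - 1 = t by omega, Finset.mul_sum]
    apply Finset.sum_congr rfl
    intro s _
    ring
  rw [Finset.sum_congr rfl hterm, Finset.sum_comm]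
  have hcol : ∀ s ∈ Finset.range m,
      ∑ t ∈ Finset.range K,
          (m.choose (s + 1) : ℝ) * ρ ^ (s + 1) * (((K - t) : ℕ) * (t.choose s : ℕ) : ℝ)
        = (m.choose (s + 1) : ℝ) * ρ ^ (s + 1) * (((K + 1).choose (s + 2) : ℕ) : ℝ) := by
    intro s _
    rw [← Finset.mul_sum]
    congr 1
    rw [← stmt13_dbl K s, Nat.cast_sum]
    exact Finset.sum_congr rfl fun t _ => by push_cast; ring
  rw [Finset.sum_congr rfl hcol]
  -- now expand the RHS
  rw [Finset.sum_range_succ' (fun s =>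
    (m.choose s : ℝ) * ρ ^ s * (((m + (K + 1) - m).choose (s + 1) : ℕ) : ℝ))]
  have hNm : m + (K + 1) - m = K + 1 := by omega
  rw [hNm]
  have e1 : ∀ x ∈ Finset.range m,
      (m.choose (x + 1) : ℝ) * ρ ^ (x + 1) * (((K + 1).choose (x + 1 + 1) : ℕ) : ℝ)
        = (m.choose (x + 1) : ℝ) * ρ ^ (x + 1) * (((K + 1).choose (x + 2) : ℕ) : ℝ) :=
    fun x _ => rfl
  rw [Finset.sum_congr rfl e1]
  have e2 : ((m.choose 0 : ℕ) : ℝ) * ρ ^ 0 * (((K + 1).choose (0 + 1) : ℕ) : ℝ)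
      = ((K + 1 : ℕ) : ℝ) := by
    rw [Nat.choose_zero_right, show (0 : ℕ) + 1 = 1 by omega, Nat.choose_one_right]
    ring
  rw [e2]
end

section
/- Let R be a commutative ring, A an N×N matrix over R, γ ∈ R, B = γ·𝟙𝟙ᵀ + (1−γ)·I, and for k ≥ 1 set S_k := 𝟙ᵀ (A·B)^{k−1} A 𝟙 and g_m := 𝟙ᵀ A^m 𝟙. Then for every k ≥ 1: S_k = ∑_{p=1}^{k} γ^{p−1}·(1−γ)^{k−p} · ∑_{(m_1,…,m_p)} ∏_{i=1}^{p} g_{m_i}, where the inner sum ranges over all compositions of k into p positive parts, i.e. tuples (m_1,…,m_p) with each m_i ≥ 1 and m_1 + ⋯ + m_p = k. -/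
open Finset

-- combinatorial quantity
noncomputable def Cq {R : Type*} [CommRing R] (g : ℕ → R) (p n : ℕ) : R :=
  ∑ m ∈ (Finset.Nat.antidiagonalTuple p n).filter (fun m => ∀ i, 1 ≤ m i), ∏ i, g (m i)

lemma Cq_zero {R : Type*} [CommRing R] (g : ℕ → R) {p n : ℕ} (hp : 1 ≤ p) (h : n < p) :
    Cq g p n = 0 := by
  unfold Cq
  apply Finset.sum_eq_zero
  intro m hm
  exfalso
  simp only [Finset.mem_filter, Finset.Nat.mem_antidiagonalTuple] at hm
  have : (p : ℕ) ≤ ∑ i, m i := by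
    calc (p:ℕ) = ∑ _i : Fin p, 1 := by simp
    _ ≤ ∑ i, m i := Finset.sum_le_sum (fun i _ => hm.2 i)
  omega

lemma Cq_one {R : Type*} [CommRing R] (g : ℕ → R) {n : ℕ} (hn : 1 ≤ n) :
    Cq g 1 n = g n := by
  unfold Cq
  rw [Finset.Nat.antidiagonalTuple_one]
  rw [Finset.filter_singleton]
  simp [Fin.forall_fin_one, hn]

lemma Cq_cons {R : Type*} [CommRing R] (g : ℕ → R) (p n : ℕ) :
    Cq g (p+1) n = ∑ j ∈ Finset.Icc 1 n, g j * Cq g p (n - j) := by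
  unfold Cq
  simp_rw [Finset.mul_sum]
  rw [← Finset.sum_sigma (Finset.Icc 1 n)
    (fun j => (Finset.Nat.antidiagonalTuple p (n - j)).filter (fun m => ∀ i, 1 ≤ m i))
    (fun x => g x.1 * ∏ i, g (x.2 i))]
  refine Finset.sum_nbij' (i := fun m => ⟨m 0, Fin.tail m⟩)
    (j := fun x => Fin.cons x.1 x.2) ?_ ?_ ?_ ?_ ?_
  · intro m hm
    simp only [Finset.mem_filter, Finset.Nat.mem_antidiagonalTuple] at hm
    obtain ⟨hsum, hpos⟩ := hm
    have h0 : m 0 ≤ n := hsum ▸ Finset.single_le_sum (fun i _ => Nat.zero_le _) (Finset.mem_univ 0)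
    refine Finset.mem_sigma.mpr ⟨Finset.mem_Icc.mpr ⟨hpos 0, h0⟩, ?_⟩
    simp only [Finset.mem_filter, Finset.Nat.mem_antidiagonalTuple]
    constructor
    · have h := Fin.sum_univ_succ m
      rw [hsum] at h
      simp only [Fin.tail]
      omega
    · intro i; exact hpos i.succ
  · intro x hx
    simp only [Finset.mem_sigma, Finset.mem_filter, Finset.mem_Icc,
      Finset.Nat.mem_antidiagonalTuple] at hx
    obtain ⟨⟨h1, h2⟩, hsum, hpos⟩ := hx
    simp only [Finset.mem_filter, Finset.Nat.mem_antidiagonalTuple]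
    constructor
    · rw [Fin.sum_univ_succ]
      simp only [Fin.cons_zero, Fin.cons_succ]
      omega
    · intro i
      refine Fin.cases ?_ ?_ i
      · simpa using h1
      · intro j; simpa using hpos j
  · intro m hm; exact Fin.cons_self_tail m
  · intro x hx; simp
  · intro m hm
    rw [Fin.prod_univ_succ]
    rfl
noncomputable def Fq {R : Type*} [CommRing R] (γ : R) (g : ℕ → R) (k : ℕ) : R :=
  ∑ p ∈ Finset.Icc 1 k, γ^(p-1) * (1-γ)^(k-p) * Cq g p k

lemma Fq_rec {R : Type*} [CommRing R] (γ : R) (g : ℕ → R) {k : ℕ} (hk : 1 ≤ k) :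
    Fq γ g k = (1-γ)^(k-1) * g k
      + γ * ∑ j ∈ Finset.Icc 1 (k-1), (1-γ)^(j-1) * g j * Fq γ g (k-j) := by
  unfold Fq
  have h1 : Finset.Icc 1 k = insert 1 (Finset.Icc 2 k) :=
    Finset.ext fun x => by simp only [Finset.mem_Icc, Finset.mem_insert]; omega
  rw [h1, Finset.sum_insert (by simp)]
  rw [Cq_one g hk]
  congr 1
  · simp
  have h2 : Finset.Icc 2 k = (Finset.Icc 1 (k-1)).map (addRightEmbedding 1) := by
    rw [Finset.map_add_right_Icc]
    congr 1 <;> omega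
  rw [h2, Finset.sum_map]
  simp only [addRightEmbedding_apply]
  simp_rw [Cq_cons g _ k, Finset.mul_sum]
  rw [Finset.sum_comm]
  have h3 : Finset.Icc 1 k = insert k (Finset.Icc 1 (k-1)) :=
    Finset.ext fun x => by simp only [Finset.mem_Icc, Finset.mem_insert]; omega
  rw [h3, Finset.sum_insert (by simp only [Finset.mem_Icc]; omega)]
  rw [Finset.sum_eq_zero (fun q hq => by
    have hq' := Finset.mem_Icc.mp hq
    rw [Cq_zero g hq'.1 (by omega)]; ring), zero_add]
  refine Finset.sum_congr rfl fun j hj => ?_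
  rw [Finset.mem_Icc] at hj
  rw [Finset.sum_subset (Finset.Icc_subset_Icc_right (by omega : k-j ≤ k-1)) (fun q hq1 hq2 => by
    rw [Finset.mem_Icc] at hq1 hq2
    rw [Cq_zero g (by omega) (by omega)]; ring)]
  refine Finset.sum_congr rfl fun q hq => ?_
  rw [Finset.mem_Icc] at hq
  by_cases hqj : q ≤ k - j
  · rw [show k - (q + 1) = (j-1) + (k-j-q) by omega, pow_add,
      show q + 1 - 1 = 1 + (q-1) by omega, pow_add, pow_one]
    ring
  · rw [Cq_zero g (by omega) (by omega)]
    ring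

lemma Mrec' {N : ℕ} {R : Type*} [CommRing R] (A : Matrix (Fin N) (Fin N) R) (γ : R)
    (B : Matrix (Fin N) (Fin N) R)
    (hB : B = γ • Matrix.of (fun _ _ : Fin N => (1 : R)) + (1 - γ) • 1)
    {k : ℕ} (hk : 1 ≤ k) :
    (A * B) ^ (k-1) * A = (1-γ)^(k-1) • A^k
      + ∑ j ∈ Finset.Icc 1 (k-1), (γ * (1-γ)^(j-1)) •
          (A^j * Matrix.of (fun _ _ : Fin N => (1:R)) * ((A*B)^(k-1-j) * A)) := by
  set J : Matrix (Fin N) (Fin N) R := Matrix.of (fun _ _ : Fin N => (1:R)) with hJ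
  induction k, hk using Nat.le_induction with
  | base => simp
  | succ k hk ih =>
    obtain ⟨m, rfl⟩ : ∃ m, k = m + 1 := ⟨k-1, by omega⟩
    simp only [Nat.add_sub_cancel] at ih ⊢
    have key : ∀ E : Matrix (Fin N) (Fin N) R,
        (A * B) * E = γ • (A*J*E) + (1-γ) • (A*E) := by
      intro E
      rw [hB, Matrix.mul_add, Matrix.mul_smul, Matrix.mul_smul, Matrix.mul_one,
        add_mul, smul_mul_assoc, smul_mul_assoc]
    have hsplit : Finset.Icc 1 (m+1) = insert 1 (Finset.Icc 2 (m+1)) :=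
      Finset.ext fun x => by simp only [Finset.mem_Icc, Finset.mem_insert]; omega
    rw [hsplit, Finset.sum_insert (by simp)]
    have h2 : Finset.Icc 2 (m+1) = (Finset.Icc 1 m).map (addRightEmbedding 1) := by
      rw [Finset.map_add_right_Icc]
    rw [h2, Finset.sum_map]
    simp only [addRightEmbedding_apply]
    rw [pow_succ', mul_assoc, key]
    simp only [pow_one, Nat.sub_self, pow_zero, mul_one, Nat.add_sub_cancel,
      Nat.add_sub_add_right]
    rw [add_left_comm]
    congr 1
    rw [ih, mul_add, Finset.mul_sum]
    simp only [mul_smul_comm, smul_add, Finset.smul_sum, smul_smul]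
    congr 1
    · rw [← pow_succ', ← pow_succ']
    refine Finset.sum_congr rfl fun q hq => ?_
    rw [Finset.mem_Icc] at hq
    have hpq : (1-γ)^q = (1-γ)^(q-1) * (1-γ) := by
      rw [← pow_succ]; congr 1; omega
    congr 1
    · rw [hpq]; ring
    · simp [pow_succ', mul_assoc]
lemma entries_mul_J_mul {N : ℕ} {R : Type*} [CommRing R] (P M : Matrix (Fin N) (Fin N) R) :
    ∑ i, ∑ l, (P * Matrix.of (fun _ _ : Fin N => (1:R)) * M) i l
      = (∑ i, ∑ a, P i a) * (∑ b, ∑ l, M b l) := by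
  have h1 : ∀ i l, (P * Matrix.of (fun _ _ : Fin N => (1:R)) * M) i l
      = ∑ b, (∑ a, P i a) * M b l := by
    intro i l
    rw [Matrix.mul_apply]
    refine Finset.sum_congr rfl fun b _ => ?_
    rw [Matrix.mul_apply]
    simp
  simp_rw [h1]
  rw [Finset.sum_mul]
  refine Finset.sum_congr rfl fun i _ => ?_
  rw [Finset.sum_comm, Finset.mul_sum]
  refine Finset.sum_congr rfl fun b _ => ?_
  rw [Finset.mul_sum]

lemma Srec {N : ℕ} {R : Type*} [CommRing R] (A : Matrix (Fin N) (Fin N) R) (γ : R)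
    (B : Matrix (Fin N) (Fin N) R)
    (hB : B = γ • Matrix.of (fun _ _ : Fin N => (1 : R)) + (1 - γ) • 1)
    (g : ℕ → R) (hg : ∀ m : ℕ, g m = ∑ i : Fin N, ∑ j : Fin N, (A ^ m) i j)
    (S : ℕ → R) (hS : ∀ k : ℕ, 1 ≤ k →
      S k = ∑ i : Fin N, ∑ j : Fin N, ((A * B) ^ (k - 1) * A) i j)
    {k : ℕ} (hk : 1 ≤ k) :
    S k = (1-γ)^(k-1) * g k
      + γ * ∑ j ∈ Finset.Icc 1 (k-1), (1-γ)^(j-1) * g j * S (k-j) := by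
  rw [hS k hk, Mrec' A γ B hB hk]
  simp only [Matrix.add_apply, Matrix.sum_apply, Matrix.smul_apply, smul_eq_mul,
    Finset.sum_add_distrib]
  congr 1
  · rw [hg k, Finset.mul_sum]
    refine Finset.sum_congr rfl fun i _ => ?_
    rw [Finset.mul_sum]
  · have hswap : ∀ i : Fin N, (∑ l : Fin N, ∑ j ∈ Finset.Icc 1 (k-1),
        (γ * (1-γ)^(j-1)) * (A^j * Matrix.of (fun _ _ : Fin N => (1:R))
          * ((A*B)^(k-1-j) * A)) i l)
        = ∑ j ∈ Finset.Icc 1 (k-1), ∑ l : Fin N,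
        (γ * (1-γ)^(j-1)) * (A^j * Matrix.of (fun _ _ : Fin N => (1:R))
          * ((A*B)^(k-1-j) * A)) i l := fun i => Finset.sum_comm
    simp_rw [hswap]
    rw [Finset.sum_comm, Finset.mul_sum]
    refine Finset.sum_congr rfl fun j hj => ?_
    rw [Finset.mem_Icc] at hj
    simp_rw [← Finset.mul_sum]
    rw [entries_mul_J_mul, ← hg j, hS (k-j) (by omega)]
    rw [show k - j - 1 = k - 1 - j by omega]
    ring

/-- Let `R` be a commutative ring, `A` an `N×N` matrix over `R`,
`γ ∈ R`, `B = γ·𝟙𝟙ᵀ + (1−γ)·I`, and for `k ≥ 1` set `S_k := 𝟙ᵀ (A·B)^{k−1} A 𝟙` (the sum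
of all entries of `(A·B)^{k−1}·A`) and `g_m := 𝟙ᵀ A^m 𝟙` (the sum of all entries of `A^m`).
Then for every `k ≥ 1`:
`S_k = ∑_{p=1}^{k} γ^{p−1}·(1−γ)^{k−p} · ∑_{(m_1,…,m_p)} ∏_i g_{m_i}`,
the inner sum ranging over all compositions of `k` into `p` positive parts. -/
theorem stmt15 (N : ℕ) (hN : 0 < N) (R : Type*) [CommRing R]
    (A : Matrix (Fin N) (Fin N) R) (γ : R)
    (B : Matrix (Fin N) (Fin N) R)
    (hB : B = γ • Matrix.of (fun _ _ : Fin N => (1 : R))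
      + (1 - γ) • (1 : Matrix (Fin N) (Fin N) R))
    (g : ℕ → R) (hg : ∀ m : ℕ, g m = ∑ i : Fin N, ∑ j : Fin N, (A ^ m) i j)
    (S : ℕ → R) (hS : ∀ k : ℕ, 1 ≤ k →
      S k = ∑ i : Fin N, ∑ j : Fin N, ((A * B) ^ (k - 1) * A) i j)
    (k : ℕ) (hk : 1 ≤ k) :
    S k = ∑ p ∈ Finset.Icc 1 k, γ ^ (p - 1) * (1 - γ) ^ (k - p) *
      ∑ m ∈ (Finset.Nat.antidiagonalTuple p k).filter (fun m => ∀ i, 1 ≤ m i),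
        ∏ i, g (m i) := by
  suffices h : ∀ k, 1 ≤ k → S k = Fq γ g k by
    exact h k hk
  clear hk
  intro k
  induction k using Nat.strong_induction_on with
  | _ k ih =>
    intro hk
    rw [Srec A γ B hB g hg S hS hk, Fq_rec γ g hk]
    congr 1
    rw [Finset.mul_sum, Finset.mul_sum]
    refine Finset.sum_congr rfl fun j hj => ?_
    rw [Finset.mem_Icc] at hj
    rw [ih (k-j) (by omega) (by omega)]
end

section
/- Let A be an N×N real matrix, γ, z ∈ ℝ, and suppose I − z(1−γ)A is invertible. Set Θ := 𝟙ᵀ (I − z(1−γ)A)⁻¹ A 𝟙 and suppose 1 − zγΘ ≠ 0. Then the matrix I − z·((1−γ)A + γ·(A𝟙)𝟙ᵀ) is invertible and 𝟙ᵀ (I − z·((1−γ)A + γ·(A𝟙)𝟙ᵀ))⁻¹ (z·A𝟙) = zΘ / (1 − zγΘ). -/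
open Matrix

lemma aux_mul_vecMulVec {n : Type*} [Fintype n] (X : Matrix n n ℝ) (u v : n → ℝ) :
    X * vecMulVec u v = vecMulVec (X.mulVec u) v := by
  ext i j
  simp [mul_apply, vecMulVec_apply, mulVec, dotProduct, Finset.sum_mul, mul_assoc]

lemma aux_vecMulVec_mulVec {n : Type*} [Fintype n] (u v w : n → ℝ) :
    (vecMulVec u v).mulVec w = (v ⬝ᵥ w) • u := by
  ext i
  simp only [mulVec, vecMulVec_apply, dotProduct, Pi.smul_apply, smul_eq_mul,
    Finset.sum_mul]
  apply Finset.sum_congr rfl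
  intros; ring

lemma aux_smul_vecMulVec {n : Type*} (a : ℝ) (u v : n → ℝ) :
    vecMulVec (a • u) v = a • vecMulVec u v := by
  ext i j
  simp [vecMulVec_apply, mul_assoc]

/-- Let `A` be an `N×N` real matrix, `γ, z ∈ ℝ`, and suppose
`I − z(1−γ)A` is invertible. Set `Θ := 𝟙ᵀ (I − z(1−γ)A)⁻¹ A 𝟙` and suppose
`1 − zγΘ ≠ 0`. Then `I − z·((1−γ)A + γ·(A𝟙)𝟙ᵀ)` is invertible and
`𝟙ᵀ (I − z·((1−γ)A + γ·(A𝟙)𝟙ᵀ))⁻¹ (z·A𝟙) = zΘ / (1 − zγΘ)`. -/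
theorem stmt16 (N : ℕ) (hN : 0 < N)
    (A : Matrix (Fin N) (Fin N) ℝ) (γ z : ℝ)
    (h1 : IsUnit ((1 : Matrix (Fin N) (Fin N) ℝ) - (z * (1 - γ)) • A))
    (Θ : ℝ)
    (hΘ : Θ = ∑ i : Fin N,
      (((1 : Matrix (Fin N) (Fin N) ℝ) - (z * (1 - γ)) • A)⁻¹).mulVec
        (A.mulVec (fun _ => (1 : ℝ))) i)
    (h2 : 1 - z * γ * Θ ≠ 0) :
    IsUnit ((1 : Matrix (Fin N) (Fin N) ℝ)
        - z • ((1 - γ) • A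
          + γ • Matrix.vecMulVec (A.mulVec (fun _ => (1 : ℝ))) (fun _ => (1 : ℝ)))) ∧
    ∑ i : Fin N,
        (((1 : Matrix (Fin N) (Fin N) ℝ)
          - z • ((1 - γ) • A
            + γ • Matrix.vecMulVec (A.mulVec (fun _ => (1 : ℝ))) (fun _ => (1 : ℝ))))⁻¹).mulVec
          (z • A.mulVec (fun _ => (1 : ℝ))) i
      = z * Θ / (1 - z * γ * Θ) := by
  set o : Fin N → ℝ := fun _ => (1 : ℝ) with ho
  set u : Fin N → ℝ := A.mulVec o with hu
  set B : Matrix (Fin N) (Fin N) ℝ := (1 : Matrix (Fin N) (Fin N) ℝ) - (z * (1 - γ)) • A with hB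
  set V : Matrix (Fin N) (Fin N) ℝ := vecMulVec u o with hV
  set M : Matrix (Fin N) (Fin N) ℝ := (1 : Matrix (Fin N) (Fin N) ℝ)
      - z • ((1 - γ) • A + γ • V) with hM
  have hdet : IsUnit B.det := (Matrix.isUnit_iff_isUnit_det B).mp h1
  have hMB : M = B - (z * γ) • V := by
    rw [hM, hB, smul_add, smul_smul, smul_smul, sub_sub]
  have hBB : B * B⁻¹ = 1 := Matrix.mul_nonsing_inv B hdet
  have hΘ' : o ⬝ᵥ (B⁻¹.mulVec u) = Θ := by
    rw [hΘ]; simp [dotProduct, ho]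
  set c : ℝ := z * γ / (1 - z * γ * Θ) with hc
  set C : Matrix (Fin N) (Fin N) ℝ := B⁻¹ + c • (B⁻¹ * V * B⁻¹) with hC
  have hBX : ∀ X : Matrix (Fin N) (Fin N) ℝ, B * (B⁻¹ * X) = X := fun X => by
    rw [← Matrix.mul_assoc, hBB, Matrix.one_mul]
  have hVX : V * (B⁻¹ * (V * B⁻¹)) = Θ • (V * B⁻¹) := by
    rw [← Matrix.mul_assoc, ← Matrix.mul_assoc, hV, aux_mul_vecMulVec,
      ← Matrix.mulVec_mulVec, aux_vecMulVec_mulVec, hΘ', aux_smul_vecMulVec,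
      Matrix.smul_mul]
  have hMC : M * C = 1 := by
    rw [hMB, hC]
    simp only [Matrix.sub_mul, Matrix.mul_add, Matrix.mul_smul, Matrix.smul_mul,
      Matrix.mul_assoc, hBB, hBX, hVX]
    have h0 : c - (z * γ + z * γ * (c * Θ)) = 0 := by
      rw [hc]; field_simp; ring
    have h1' : c - c * (z * γ) * Θ = z * γ := by
      rw [hc]; field_simp
    rw [smul_sub, smul_smul, smul_smul, ← sub_smul, h1']
    abel
  have hMunit : IsUnit M := by
    have := invertibleOfRightInverse _ _ hMC
    exact isUnit_of_invertible M
  have hMinv : M⁻¹ = C := Matrix.inv_eq_right_inv hMC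
  refine ⟨hMunit, ?_⟩
  have key : o ⬝ᵥ (B⁻¹ * V * B⁻¹).mulVec u = Θ * Θ := by
    rw [← Matrix.mulVec_mulVec, ← Matrix.mulVec_mulVec, hV, aux_vecMulVec_mulVec, hΘ',
      Matrix.mulVec_smul, dotProduct_smul, hΘ', smul_eq_mul]
  have hsum : ∑ i : Fin N, (M⁻¹.mulVec (z • u)) i = o ⬝ᵥ M⁻¹.mulVec (z • u) := by
    simp [dotProduct, ho]
  rw [hsum, hMinv, hC, Matrix.mulVec_smul, dotProduct_smul, Matrix.add_mulVec,
    Matrix.smul_mulVec, dotProduct_add, dotProduct_smul, hΘ', key, smul_eq_mul,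
    smul_eq_mul]
  have h3 : Θ + c * (Θ * Θ) = Θ / (1 - z * γ * Θ) := by
    have hc1 : c * (1 - z * γ * Θ) = z * γ := by rw [hc]; exact div_mul_cancel₀ _ h2
    rw [eq_div_iff h2]; linear_combination (Θ * Θ) * hc1
  rw [h3]
  ring
end

section
/- Let ρ ∈ (0,1) and for x ∈ (0,1), α ∈ [0, min(x, 1−x)] define ψ(x, α; ρ) := x·H(α/x) + (1−x)·H(α/(1−x)) + α·log ρ. Then Λ(ρ) := 2·max_{0 ≤ α ≤ 1/2} ψ(1/2, α; ρ) = 2·log(1 + √ρ). -/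
/-- Key pointwise bound: for `0 ≤ u ≤ 1` and `s > 0`,
`-u·log u - (1-u)·log(1-u) + u·log s ≤ log (1+s)`. -/
lemma stmt18_aux (s u : ℝ) (hs : 0 < s) (hu0 : 0 ≤ u) (hu1 : u ≤ 1) :
    -u * Real.log u - (1 - u) * Real.log (1 - u) + u * Real.log s
      ≤ Real.log (1 + s) := by
  have h1s : (0:ℝ) < 1 + s := by linarith
  have hlog : 0 ≤ Real.log (1 + s) := Real.log_nonneg (by linarith)
  rcases eq_or_lt_of_le hu0 with h0 | h0
  · simp [← h0, hlog]
  rcases eq_or_lt_of_le hu1 with h1 | h1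
  · rw [h1]
    simp only [sub_self, zero_mul, sub_zero, one_mul, Real.log_one, mul_zero, neg_zero,
      zero_add]
    exact Real.log_le_log hs (by linarith)
  · have h1u : 0 < 1 - u := by linarith
    have hA := Real.log_le_sub_one_of_pos (show (0:ℝ) < s / (u * (1 + s)) by positivity)
    have hB := Real.log_le_sub_one_of_pos
      (show (0:ℝ) < 1 / ((1 - u) * (1 + s)) by positivity)
    rw [Real.log_div hs.ne' (by positivity), Real.log_mul h0.ne' h1s.ne'] at hA
    rw [one_div, Real.log_inv, Real.log_mul h1u.ne' h1s.ne'] at hB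
    have hA' := mul_le_mul_of_nonneg_left hA h0.le
    have hB' := mul_le_mul_of_nonneg_left hB h1u.le
    have eA : u * (s / (u * (1 + s)) - 1) = s / (1 + s) - u := by
      field_simp
    have eB : (1 - u) * (((1 - u) * (1 + s))⁻¹ - 1) = 1 / (1 + s) - (1 - u) := by
      field_simp
    have hsum : s / (1 + s) + 1 / (1 + s) = 1 := by
      field_simp; ring
    linarith [hA', hB', eA, eB, hsum]

/-- Let `ρ ∈ (0,1)` and define
`ψ(x, α; ρ) := x·H(α/x) + (1−x)·H(α/(1−x)) + α·log ρ`. Then the maximum of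
`ψ(1/2, ·; ρ)` over `α ∈ [0, 1/2]` equals `log(1 + √ρ)`, i.e.
`Λ(ρ) := 2·max_{0 ≤ α ≤ 1/2} ψ(1/2, α; ρ) = 2·log(1 + √ρ)`. -/
theorem stmt18 (ρ : ℝ) (hρ0 : 0 < ρ) (hρ1 : ρ < 1)
    (H : ℝ → ℝ)
    (hH : ∀ u : ℝ, H u = -u * Real.log u - (1 - u) * Real.log (1 - u))
    (ψ : ℝ → ℝ → ℝ)
    (hψ : ∀ x α : ℝ, ψ x α
      = x * H (α / x) + (1 - x) * H (α / (1 - x)) + α * Real.log ρ) :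
    IsGreatest (ψ (1 / 2) '' Set.Icc (0 : ℝ) (1 / 2)) (Real.log (1 + Real.sqrt ρ)) ∧
    2 * sSup (ψ (1 / 2) '' Set.Icc (0 : ℝ) (1 / 2)) = 2 * Real.log (1 + Real.sqrt ρ) := by
  set s := Real.sqrt ρ with hsdef
  have hs0 : 0 < s := Real.sqrt_pos.2 hρ0
  have h1s : (0:ℝ) < 1 + s := by linarith
  have hρs : Real.log ρ = 2 * Real.log s := by
    have hρ : ρ = s ^ 2 := (Real.sq_sqrt hρ0.le).symm
    rw [hρ, Real.log_pow]; norm_num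
  have hψ' : ∀ α : ℝ, ψ (1/2) α = H (2 * α) + α * Real.log ρ := by
    intro α
    rw [hψ]
    have e1 : α / (1/2 : ℝ) = 2 * α := by ring
    have e2 : α / (1 - 1/2 : ℝ) = 2 * α := by norm_num; ring
    rw [e1, e2]; ring
  have key : IsGreatest (ψ (1 / 2) '' Set.Icc (0 : ℝ) (1 / 2)) (Real.log (1 + s)) := by
    constructor
    · refine ⟨s / (2 * (1 + s)), ⟨by positivity, ?_⟩, ?_⟩
      · rw [div_le_div_iff₀ (by positivity) two_pos]; nlinarith
      · rw [hψ', hH, hρs]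
        have h2α : 2 * (s / (2 * (1 + s))) = s / (1 + s) := by
          field_simp
        rw [h2α]
        have ht1 : (1:ℝ) - s / (1 + s) = 1 / (1 + s) := by field_simp; ring
        have hlt : Real.log (s / (1 + s)) = Real.log s - Real.log (1 + s) :=
          Real.log_div hs0.ne' h1s.ne'
        have hl1t : Real.log (1 / (1 + s)) = -Real.log (1 + s) := by
          rw [one_div, Real.log_inv]
        rw [ht1, hlt, hl1t]
        field_simp
        ring
    · rintro y ⟨α, ⟨hα0, hα1⟩, rfl⟩
      rw [hψ', hH, hρs]
      have := stmt18_aux s (2 * α) hs0 (by linarith) (by linarith)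
      linarith
  exact ⟨key, by rw [key.csSup_eq]⟩
end
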